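/- arXiv:2402.01288 — 2 statements merged into one kernel-verified Lean document; each statement's English description precedes it below -/
import Mathlib

section
/- The series Σ_{p=1}^∞ 1/((2p+1)²(2p-1)²) equals (π² - 8)/16. -/
open Real

open Filter Topology in
private lemma aux_even_sq : HasSum (fun k : ℕ => (1:ℝ)/((2*k : ℕ):ℝ)^2) (π^2/6/4) := by
  have h := hasSum_zeta_two.div_const 4
  convert h using 1
  · rfl
  funext k
  push_cast
  rcases eq_or_ne (k:ℝ) 0 with h0 | h0
  · simp [h0]
  · field_simp; ring

open Filter Topology in
private lemma aux_odd_sq : HasSum (fun p : ℕ => (1:ℝ)/(2*(p:ℝ)+1)^2) (π^2/8) := by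
  have hinj : Function.Injective (fun k : ℕ => 2*k+1) := fun a b h => by simpa using h
  have hodd : Summable (fun k : ℕ => (1:ℝ)/((2*k+1 : ℕ):ℝ)^2) :=
    hasSum_zeta_two.summable.comp_injective hinj
  have hcombine := HasSum.even_add_odd (f := fun n : ℕ => (1:ℝ)/(n:ℝ)^2) aux_even_sq hodd.hasSum
  have huniq := hasSum_zeta_two.unique hcombine
  have ht : ∑' k : ℕ, (1:ℝ)/((2*k+1 : ℕ):ℝ)^2 = π^2/8 := by linarith
  have h2 := hodd.hasSum
  rw [ht] at h2
  convert h2 using 2 with p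
  push_cast
  ring

open Filter Topology in
private lemma aux_shift_sq : HasSum (fun p : ℕ => (1:ℝ)/(2*(p:ℝ)+3)^2) (π^2/8 - 1) := by
  have h := (hasSum_nat_add_iff' (f := fun p : ℕ => (1:ℝ)/(2*(p:ℝ)+1)^2) 1).mpr aux_odd_sq
  simp only [Finset.sum_range_one, Nat.cast_zero] at h
  norm_num at h
  convert h using 2 with p
  · rfl
  ring

open Filter Topology in
private lemma aux_tel : HasSum (fun p : ℕ => (1:ℝ)/(2*(p:ℝ)+1) - 1/(2*(p:ℝ)+3)) 1 := by
  have hnn : ∀ p : ℕ, 0 ≤ (1:ℝ)/(2*(p:ℝ)+1) - 1/(2*(p:ℝ)+3) := by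
    intro p
    have h1 : (0:ℝ) < 2*(p:ℝ)+1 := by positivity
    have h2 : (2*(p:ℝ)+1) ≤ 2*(p:ℝ)+3 := by linarith
    have := one_div_le_one_div_of_le h1 h2
    linarith
  rw [hasSum_iff_tendsto_nat_of_nonneg hnn]
  have hps : ∀ n : ℕ, ∑ i ∈ Finset.range n, ((1:ℝ)/(2*(i:ℝ)+1) - 1/(2*(i:ℝ)+3))
      = 1 - 1/(2*(n:ℝ)+1) := by
    intro n
    have key := Finset.sum_range_sub' (f := fun i : ℕ => (1:ℝ)/(2*(i:ℝ)+1)) n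
    calc ∑ i ∈ Finset.range n, ((1:ℝ)/(2*(i:ℝ)+1) - 1/(2*(i:ℝ)+3))
        = ∑ i ∈ Finset.range n, ((1:ℝ)/(2*(i:ℝ)+1) - 1/(2*((i+1 : ℕ):ℝ)+1)) := by
          apply Finset.sum_congr rfl
          intro i _
          push_cast
          ring_nf
      _ = 1/(2*((0:ℕ):ℝ)+1) - 1/(2*(n:ℝ)+1) := key
      _ = 1 - 1/(2*(n:ℝ)+1) := by norm_num
  simp only [hps]
  have hat : Tendsto (fun n : ℕ => 2*(n:ℝ)+1) atTop atTop :=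
    tendsto_atTop_add_const_right _ 1 (tendsto_natCast_atTop_atTop.const_mul_atTop two_pos)
  have hz : Tendsto (fun n : ℕ => (1:ℝ)/(2*(n:ℝ)+1)) atTop (𝓝 0) := by
    simpa [one_div, Function.comp_def] using tendsto_inv_atTop_zero.comp hat
  have h := (tendsto_const_nhds (x := (1:ℝ))).sub hz
  simpa using h

/-- `Σ_{p=1}^∞ 1/((2p+1)²(2p-1)²) = (π² - 8)/16`
(the sum below is indexed by `p : ℕ` standing for `p+1 ≥ 1`, so the term is
`1/((2p+3)²(2p+1)²)`). -/
theorem stmt_10 :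
    ∑' p : ℕ, (1 : ℝ) / ((2 * (p : ℝ) + 3) ^ 2 * (2 * (p : ℝ) + 1) ^ 2)
      = (π ^ 2 - 8) / 16 := by
  have hA := ((aux_odd_sq.add aux_shift_sq).div_const 4).sub (aux_tel.div_const 4)
  have hfun : (fun p : ℕ => ((1:ℝ)/(2*(p:ℝ)+1)^2 + 1/(2*(p:ℝ)+3)^2)/4
      - (1/(2*(p:ℝ)+1) - 1/(2*(p:ℝ)+3))/4)
      = fun p : ℕ => (1 : ℝ) / ((2 * (p : ℝ) + 3) ^ 2 * (2 * (p : ℝ) + 1) ^ 2) := by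
    funext p
    have h1 : (2*(p:ℝ)+1) ≠ 0 := by positivity
    have h3 : (2*(p:ℝ)+3) ≠ 0 := by positivity
    field_simp
    ring
  rw [hfun] at hA
  rw [hA.tsum_eq]
  ring
end

section
/- Let M ∈ ℝ^{n×m} and let v ∈ ℝ^m be a unit vector attaining ‖Mv‖₂ = ‖M‖₂ (a right singular vector for the maximal singular value). Let v_abs ∈ ℝ₊^m be the vector with entries |v_i|. Then the nonnegative induced norm ‖M‖_{2+} := max{ |Mx|₂ : x ∈ ℝ₊^m, |x|₂ = 1 } satisfies ‖M‖_{2+} ≥ (1/√2) · √(‖M‖₂² + |M v_abs|₂²). -/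
set_option maxHeartbeats 1000000


open Matrix

/-- The spectral norm (maximal singular value) of a real matrix, i.e. the operator
norm of the induced map between Euclidean spaces. -/
noncomputable def specNorm {n m : ℕ} (M : Matrix (Fin n) (Fin m) ℝ) : ℝ :=
  ‖LinearMap.toContinuousLinearMap (Matrix.toEuclideanLin M)‖

/-- The nonnegative-input induced norm `‖M‖_{2+} = sup {|Mx|₂ : x ≥ 0, |x|₂ = 1}`. -/
noncomputable def posNorm {n m : ℕ} (M : Matrix (Fin n) (Fin m) ℝ) : ℝ :=
  sSup {c : ℝ | ∃ x : EuclideanSpace ℝ (Fin m),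
    (∀ i, 0 ≤ x i) ∧ ‖x‖ = 1 ∧ c = ‖Matrix.toEuclideanLin M x‖}

lemma posNorm_bdd {n m : ℕ} (M : Matrix (Fin n) (Fin m) ℝ) :
    BddAbove {c : ℝ | ∃ x : EuclideanSpace ℝ (Fin m),
      (∀ i, 0 ≤ x i) ∧ ‖x‖ = 1 ∧ c = ‖Matrix.toEuclideanLin M x‖} := by
  refine ⟨specNorm M, ?_⟩
  rintro c ⟨x, -, hx1, rfl⟩
  have := (LinearMap.toContinuousLinearMap (Matrix.toEuclideanLin M)).le_opNorm x
  simpa [specNorm, hx1] using this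

lemma posNorm_key {n m : ℕ} (M : Matrix (Fin n) (Fin m) ℝ)
    (w : EuclideanSpace ℝ (Fin m)) (hw : ∀ i, 0 ≤ w i) (hw0 : ‖w‖ ≠ 0)
    (r : ℝ) (h : r * ‖w‖ ^ 2 ≤ ‖Matrix.toEuclideanLin M w‖ ^ 2) :
    Real.sqrt r ≤ posNorm M := by
  set x : EuclideanSpace ℝ (Fin m) := ‖w‖⁻¹ • w with hxdef
  have hwpos : 0 < ‖w‖ := lt_of_le_of_ne (norm_nonneg _) (Ne.symm hw0)
  have hx1 : ‖x‖ = 1 := by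
    rw [hxdef, norm_smul, norm_inv, norm_norm, inv_mul_cancel₀ hw0]
  have hxpos : ∀ i, 0 ≤ x i := fun i => by
    have : x i = ‖w‖⁻¹ * w i := by simp [hxdef]
    rw [this]
    exact mul_nonneg (by positivity) (hw i)
  have hLx : ‖Matrix.toEuclideanLin M x‖ = ‖w‖⁻¹ * ‖Matrix.toEuclideanLin M w‖ := by
    rw [hxdef, _root_.map_smul, norm_smul, norm_inv, norm_norm]
  have hle : ‖Matrix.toEuclideanLin M x‖ ≤ posNorm M :=
    le_csSup (posNorm_bdd M) ⟨x, hxpos, hx1, rfl⟩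
  refine le_trans ?_ hle
  have hr : r ≤ ‖Matrix.toEuclideanLin M x‖ ^ 2 := by
    rw [hLx, mul_pow, inv_pow, ← div_eq_inv_mul, le_div_iff₀ (by positivity)]
    exact h
  calc Real.sqrt r ≤ Real.sqrt (‖Matrix.toEuclideanLin M x‖ ^ 2) := Real.sqrt_le_sqrt hr
    _ = ‖Matrix.toEuclideanLin M x‖ := Real.sqrt_sq (norm_nonneg _)

/-- If `v` is a unit right singular vector of `M` for its maximal singular value,
and `v_abs` is its entrywise absolute value, then
`‖M‖_{2+} ≥ (1/√2) √(‖M‖₂² + |M v_abs|₂²)`. -/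
theorem stmt_11 {n m : ℕ} (M : Matrix (Fin n) (Fin m) ℝ)
    (v : EuclideanSpace ℝ (Fin m)) (hv : ‖v‖ = 1)
    (hmax : ‖Matrix.toEuclideanLin M v‖ = specNorm M) :
    (1 / Real.sqrt 2) *
        Real.sqrt (specNorm M ^ 2 +
          ‖Matrix.toEuclideanLin M (WithLp.toLp 2 (fun i => |v i|) : EuclideanSpace ℝ (Fin m))‖ ^ 2)
      ≤ posNorm M := by
  set va : EuclideanSpace ℝ (Fin m) := WithLp.toLp 2 (fun i => |v i|) with hvadef
  set L := Matrix.toEuclideanLin M with hLdef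
  set s : ℝ := specNorm M with hsdef
  set t : ℝ := ‖L va‖ with htdef
  have hva : ‖va‖ = 1 := by
    rw [← hv]
    simp [hvadef, EuclideanSpace.norm_eq, Real.norm_eq_abs, abs_abs]
  have hgoal : (1 / Real.sqrt 2) * Real.sqrt (s ^ 2 + t ^ 2)
      = Real.sqrt ((s ^ 2 + t ^ 2) / 2) := by
    rw [Real.sqrt_div (by positivity) 2]
    ring
  rw [hgoal]
  -- abbreviations
  set a : ℝ := ‖L (v + va)‖ ^ 2 with hadef
  set b : ℝ := ‖v + va‖ ^ 2 with hbdef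
  set c : ℝ := ‖L (va - v)‖ ^ 2 with hcdef
  set d : ℝ := ‖va - v‖ ^ 2 with hddef
  have hbd : b + d = 4 := by
    have := parallelogram_law_with_norm ℝ v va
    have hrev : ‖va - v‖ = ‖v - va‖ := norm_sub_rev _ _
    rw [hbdef, hddef, hrev]
    nlinarith [this]
  have hac : a + c = 2 * (s ^ 2 + t ^ 2) := by
    have hp := parallelogram_law_with_norm ℝ (L v) (L va)
    have h1 : L (v + va) = L v + L va := map_add _ _ _
    have h2 : L (va - v) = L va - L v := map_sub _ _ _
    have hrev : ‖L va - L v‖ = ‖L v - L va‖ := norm_sub_rev _ _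
    rw [hadef, hcdef, h1, h2, hrev, ← hmax]
    nlinarith [hp]
  have hwpos1 : ∀ i, 0 ≤ (v + va) i := fun i => by
    have : (v + va) i = v i + |v i| := by simp [hvadef]
    rw [this]; linarith [neg_abs_le (v i)]
  have hwpos2 : ∀ i, 0 ≤ (va - v) i := fun i => by
    have : (va - v) i = |v i| - v i := by simp [hvadef]
    rw [this]; linarith [le_abs_self (v i)]
  have ha0 : 0 ≤ a := sq_nonneg _
  have hb0 : 0 ≤ b := sq_nonneg _
  have hc0 : 0 ≤ c := sq_nonneg _
  have hd0 : 0 ≤ d := sq_nonneg _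
  -- mediant: one of the two ratios works
  by_cases hcase : (a + c) * b ≤ 4 * a ∧ b ≠ 0
  · obtain ⟨hab, hbne⟩ := hcase
    have hwn : ‖v + va‖ ≠ 0 := fun h => hbne (by rw [hbdef, h]; ring)
    refine posNorm_key M (v + va) hwpos1 hwn _ ?_
    rw [← hbdef, ← hadef]
    nlinarith [hac]
  · -- then use va - v
    push_neg at hcase
    have hkey : (a + c) * d ≤ 4 * c ∧ d ≠ 0 := by
      by_cases hbne : b = 0
      · -- b = 0 forces v + va = 0 hence a = 0, d = 4
        have hw0 : v + va = 0 := by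
          have h2 : ‖v + va‖ ^ 2 = 0 := by rw [← hbdef]; exact hbne
          exact norm_eq_zero.mp (pow_eq_zero_iff (by norm_num) |>.mp h2)
        have ha : a = 0 := by
          rw [hadef, hw0]
          simp
        have hd4 : d = 4 := by
          have : b = 0 := hbne
          linarith
        constructor
        · rw [ha, hd4]; linarith
        · rw [hd4]; norm_num
      · have h4a : 4 * a < (a + c) * b := lt_of_not_ge fun h => hbne (hcase h)
        have hdne : d ≠ 0 := by
          intro hd
          have hn0 : ‖va - v‖ = 0 := by
            have h2 : ‖va - v‖ ^ 2 = 0 := by rw [← hddef]; exact hd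
            exact pow_eq_zero_iff (by norm_num) |>.mp h2
          have hc : c = 0 := by
            rw [hcdef, norm_eq_zero.mp hn0]
            simp
          have hb4 : b = 4 := by linarith
          rw [hc, hb4] at h4a; linarith
        exact ⟨by nlinarith, hdne⟩
    obtain ⟨hcd, hdne⟩ := hkey
    have hwn : ‖va - v‖ ≠ 0 := fun h => hdne (by rw [hddef, h]; ring)
    refine posNorm_key M (va - v) hwpos2 hwn _ ?_
    rw [← hddef, ← hcdef]
    nlinarith [hac]
end
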